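/- Let θ(t) = (θ₀(t), θ₁(t), θ₂(t)) be a solution of the Kuramoto–Sakaguchi star network θ̇ᵢ = ω + A sin(θ₀ − θᵢ − α) for i = 1,2 and θ̇₀ = ω + Σ_{j=1}^2 A sin(θⱼ − θ₀ − α) + u, with A > 0, α ∈ (0, π/2), u ≥ 0. Define r = (1/2)√((Σ_{j=1}^2 cos(θ₀ − θⱼ))² + (Σ_{j=1}^2 sin(θ₀ − θⱼ))²), μ = 1 − r, and ζ = arctan((Σ_{j=1}^2 sin(θ₀ − θⱼ))/(Σ_{j=1}^2 cos(θ₀ − θⱼ))). Then along the solution, dμ/dt = −A(1 − (1 − μ)²)cos(ζ − α) and dζ/dt = u − A(1 − μ)(2 sin(ζ + α) + sin(ζ − α)). -/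

import Mathlib

open Real

/-- r = (1/2)√((Σⱼcos(θ₀−θⱼ))² + (Σⱼsin(θ₀−θⱼ))²). -/
noncomputable def rFun (θ0 θ1 θ2 : ℝ → ℝ) (t : ℝ) : ℝ :=
  (1/2) * Real.sqrt ((Real.cos (θ0 t - θ1 t) + Real.cos (θ0 t - θ2 t))^2
    + (Real.sin (θ0 t - θ1 t) + Real.sin (θ0 t - θ2 t))^2)

/-- μ = 1 − r. -/
noncomputable def muFun (θ0 θ1 θ2 : ℝ → ℝ) (t : ℝ) : ℝ := 1 - rFun θ0 θ1 θ2 t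

/-- ζ = arctan((Σⱼsin(θ₀−θⱼ))/(Σⱼcos(θ₀−θⱼ))). -/
noncomputable def zetaFun (θ0 θ1 θ2 : ℝ → ℝ) (t : ℝ) : ℝ :=
  Real.arctan ((Real.sin (θ0 t - θ1 t) + Real.sin (θ0 t - θ2 t))
    / (Real.cos (θ0 t - θ1 t) + Real.cos (θ0 t - θ2 t)))

/-- Along solutions of the Kuramoto–Sakaguchi star network with detuning u, on the
region where ζ is a well-defined polar angle, one has
dμ/dt = −A(1 − (1−μ)²)cos(ζ−α) and dζ/dt = u − A(1−μ)(2 sin(ζ+α) + sin(ζ−α)). -/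
theorem stmt_16 (A α u ω : ℝ) (hA : 0 < A) (hα : α ∈ Set.Ioo 0 (π / 2))
    (hu : 0 ≤ u) (hω : 0 < ω)
    (θ0 θ1 θ2 : ℝ → ℝ)
    (h1 : ∀ t : ℝ, HasDerivAt θ1 (ω + A * Real.sin (θ0 t - θ1 t - α)) t)
    (h2 : ∀ t : ℝ, HasDerivAt θ2 (ω + A * Real.sin (θ0 t - θ2 t - α)) t)
    (h0 : ∀ t : ℝ, HasDerivAt θ0
      (ω + (A * Real.sin (θ1 t - θ0 t - α) + A * Real.sin (θ2 t - θ0 t - α)) + u) t) :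
    ∀ t : ℝ, 0 < Real.cos (θ0 t - θ1 t) + Real.cos (θ0 t - θ2 t) →
      HasDerivAt (muFun θ0 θ1 θ2)
        (-A * (1 - (1 - muFun θ0 θ1 θ2 t)^2) * Real.cos (zetaFun θ0 θ1 θ2 t - α)) t ∧
      HasDerivAt (zetaFun θ0 θ1 θ2)
        (u - A * (1 - muFun θ0 θ1 θ2 t) *
          (2 * Real.sin (zetaFun θ0 θ1 θ2 t + α) + Real.sin (zetaFun θ0 θ1 θ2 t - α))) t := by
  intro t hC
  set x1 : ℝ := θ0 t - θ1 t with hx1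
  set x2 : ℝ := θ0 t - θ2 t with hx2
  set c1 : ℝ := Real.cos x1 with hc1
  set s1 : ℝ := Real.sin x1 with hs1
  set c2 : ℝ := Real.cos x2 with hc2
  set s2 : ℝ := Real.sin x2 with hs2
  set ca : ℝ := Real.cos α with hca
  set sa : ℝ := Real.sin α with hsa
  -- hC : 0 < c1 + c2
  have p1 : s1 ^ 2 + c1 ^ 2 = 1 := Real.sin_sq_add_cos_sq x1
  have p2 : s2 ^ 2 + c2 ^ 2 = 1 := Real.sin_sq_add_cos_sq x2
  have hQ : (0:ℝ) < (c1 + c2) ^ 2 + (s1 + s2) ^ 2 :=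
    lt_of_lt_of_le (pow_pos hC 2) (le_add_of_nonneg_right (sq_nonneg _))
  have hR : (0:ℝ) < Real.sqrt ((c1 + c2) ^ 2 + (s1 + s2) ^ 2) := Real.sqrt_pos.mpr hQ
  have hR2 : Real.sqrt ((c1 + c2) ^ 2 + (s1 + s2) ^ 2) ^ 2 = (c1 + c2) ^ 2 + (s1 + s2) ^ 2 :=
    Real.sq_sqrt hQ.le
  -- derivatives of the phase differences
  have hd1 : HasDerivAt (fun s => θ0 s - θ1 s)
      (u - A * (Real.sin (x1 + α) + Real.sin (x2 + α)) - A * Real.sin (x1 - α)) t := by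
    have h := (h0 t).sub (h1 t)
    refine h.congr_deriv (Eq.symm ?_)
    rw [show θ1 t - θ0 t - α = -(x1 + α) by rw [hx1]; ring,
        show θ2 t - θ0 t - α = -(x2 + α) by rw [hx2]; ring,
        show θ0 t - θ1 t - α = x1 - α by rw [hx1],
        Real.sin_neg, Real.sin_neg]
    ring
  have hd2 : HasDerivAt (fun s => θ0 s - θ2 s)
      (u - A * (Real.sin (x1 + α) + Real.sin (x2 + α)) - A * Real.sin (x2 - α)) t := by
    have h := (h0 t).sub (h2 t)
    refine h.congr_deriv (Eq.symm ?_)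
    rw [show θ1 t - θ0 t - α = -(x1 + α) by rw [hx1]; ring,
        show θ2 t - θ0 t - α = -(x2 + α) by rw [hx2]; ring,
        show θ0 t - θ2 t - α = x2 - α by rw [hx2],
        Real.sin_neg, Real.sin_neg]
    ring
  have e1p : Real.sin (x1 + α) = s1 * ca + c1 * sa := by
    rw [hs1, hc1, hca, hsa]; exact Real.sin_add x1 α
  have e2p : Real.sin (x2 + α) = s2 * ca + c2 * sa := by
    rw [hs2, hc2, hca, hsa]; exact Real.sin_add x2 α
  have e1m : Real.sin (x1 - α) = s1 * ca - c1 * sa := by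
    rw [hs1, hc1, hca, hsa]; exact Real.sin_sub x1 α
  have e2m : Real.sin (x2 - α) = s2 * ca - c2 * sa := by
    rw [hs2, hc2, hca, hsa]; exact Real.sin_sub x2 α
  -- derivatives of C and S
  have hCd : HasDerivAt (fun s => Real.cos (θ0 s - θ1 s) + Real.cos (θ0 s - θ2 s))
      (-s1 * (u - A * (Real.sin (x1 + α) + Real.sin (x2 + α)) - A * Real.sin (x1 - α))
        + -s2 * (u - A * (Real.sin (x1 + α) + Real.sin (x2 + α)) - A * Real.sin (x2 - α))) t :=
    (hd1.cos).add (hd2.cos)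
  have hSd : HasDerivAt (fun s => Real.sin (θ0 s - θ1 s) + Real.sin (θ0 s - θ2 s))
      (c1 * (u - A * (Real.sin (x1 + α) + Real.sin (x2 + α)) - A * Real.sin (x1 - α))
        + c2 * (u - A * (Real.sin (x1 + α) + Real.sin (x2 + α)) - A * Real.sin (x2 - α))) t :=
    (hd1.sin).add (hd2.sin)
  -- derivative of Q = C^2 + S^2, with the trig identity baked in
  have hQd : HasDerivAt (fun s => (Real.cos (θ0 s - θ1 s) + Real.cos (θ0 s - θ2 s)) ^ 2
      + (Real.sin (θ0 s - θ1 s) + Real.sin (θ0 s - θ2 s)) ^ 2)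
      (A * (4 - ((c1 + c2) ^ 2 + (s1 + s2) ^ 2)) * ((c1 + c2) * ca + (s1 + s2) * sa)) t := by
    have h := (hCd.pow 2).add (hSd.pow 2)
    refine h.congr_deriv (Eq.symm ?_)
    push_cast
    rw [← hx1, ← hx2, ← hc1, ← hs1, ← hc2, ← hs2, e1p, e2p, e1m, e2m]
    linear_combination (-(3*c2*ca*A + 3*s2*sa*A + c1*ca*A + s1*sa*A)) * p1 +
      (-(c2*ca*A + s2*sa*A + 3*c1*ca*A + 3*s1*sa*A)) * p2
  -- cos and sin of zeta
  have hone : 1 + ((s1 + s2) / (c1 + c2)) ^ 2 = ((c1 + c2) ^ 2 + (s1 + s2) ^ 2) / (c1 + c2) ^ 2 := by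
    field_simp
  have hcz : Real.cos (Real.arctan ((s1 + s2) / (c1 + c2)))
      = (c1 + c2) / Real.sqrt ((c1 + c2) ^ 2 + (s1 + s2) ^ 2) := by
    rw [Real.cos_arctan, hone, Real.sqrt_div hQ.le, Real.sqrt_sq hC.le, one_div_div]
  have hsz : Real.sin (Real.arctan ((s1 + s2) / (c1 + c2)))
      = (s1 + s2) / Real.sqrt ((c1 + c2) ^ 2 + (s1 + s2) ^ 2) := by
    rw [Real.sin_arctan, hone, Real.sqrt_div hQ.le, Real.sqrt_sq hC.le]
    field_simp
  have hmuval : muFun θ0 θ1 θ2 t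
      = 1 - 1 / 2 * Real.sqrt ((c1 + c2) ^ 2 + (s1 + s2) ^ 2) := rfl
  have hzval : zetaFun θ0 θ1 θ2 t = Real.arctan ((s1 + s2) / (c1 + c2)) := rfl
  constructor
  · -- μ equation
    have hr : HasDerivAt (rFun θ0 θ1 θ2)
        ((1/2) * ((A * (4 - ((c1 + c2) ^ 2 + (s1 + s2) ^ 2)) * ((c1 + c2) * ca + (s1 + s2) * sa))
          / (2 * Real.sqrt ((c1 + c2) ^ 2 + (s1 + s2) ^ 2)))) t :=
      (hQd.sqrt hQ.ne').const_mul (1/2)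
    have hmu : HasDerivAt (muFun θ0 θ1 θ2)
        (0 - (1/2) * ((A * (4 - ((c1 + c2) ^ 2 + (s1 + s2) ^ 2)) * ((c1 + c2) * ca + (s1 + s2) * sa))
          / (2 * Real.sqrt ((c1 + c2) ^ 2 + (s1 + s2) ^ 2)))) t :=
      (hasDerivAt_const t (1:ℝ)).sub hr
    have hval : -A * (1 - (1 - muFun θ0 θ1 θ2 t) ^ 2) * Real.cos (zetaFun θ0 θ1 θ2 t - α)
        = 0 - (1/2) * ((A * (4 - ((c1 + c2) ^ 2 + (s1 + s2) ^ 2)) * ((c1 + c2) * ca + (s1 + s2) * sa))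
          / (2 * Real.sqrt ((c1 + c2) ^ 2 + (s1 + s2) ^ 2))) := by
      rw [hmuval, hzval, Real.cos_sub, hcz, hsz, ← hca, ← hsa]
      field_simp
      linear_combination (A * ((c1 + c2) * ca + (s1 + s2) * sa)) * hR2
    rw [hval]
    exact hmu
  · -- ζ equation
    have hdiv : HasDerivAt (fun s => (Real.sin (θ0 s - θ1 s) + Real.sin (θ0 s - θ2 s))
        / (Real.cos (θ0 s - θ1 s) + Real.cos (θ0 s - θ2 s)))
        ((((c1 + c2) ^ 2 + (s1 + s2) ^ 2) * (u - A / 2 * (3 * (s1 + s2) * ca + (c1 + c2) * sa)))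
          / (c1 + c2) ^ 2) t := by
      have h := hSd.div hCd hC.ne'
      refine h.congr_deriv (Eq.symm ?_)
      rw [← hx1, ← hx2, ← hc1, ← hs1, ← hc2, ← hs2, e1p, e2p, e1m, e2m]
      linear_combination ((A/2 * (-(c2*sa) + s2*ca + c1*sa - s1*ca)) / (c1 + c2)^2 +
          (A * ((s1 - s2) * ca - (c1 - c2) * sa)) / (c1 + c2)^2) * p1 +
        ((A/2 * (c2*sa - s2*ca - c1*sa + s1*ca)) / (c1 + c2)^2 -
          (A * ((s1 - s2) * ca - (c1 - c2) * sa)) / (c1 + c2)^2) * p2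
    have hz := hdiv.arctan
    have hval : u - A * (1 - muFun θ0 θ1 θ2 t) *
        (2 * Real.sin (zetaFun θ0 θ1 θ2 t + α) + Real.sin (zetaFun θ0 θ1 θ2 t - α))
        = 1 / (1 + ((s1 + s2) / (c1 + c2)) ^ 2) *
          ((((c1 + c2) ^ 2 + (s1 + s2) ^ 2) * (u - A / 2 * (3 * (s1 + s2) * ca + (c1 + c2) * sa)))
            / (c1 + c2) ^ 2) := by
      rw [hmuval, hzval, Real.sin_add, Real.sin_sub, hcz, hsz, ← hca, ← hsa, hone]
      field_simp
      ring
    rw [hval]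
    exact hz
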